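/- Let 𝔤 be a finite-dimensional semisimple Lie algebra over ℂ equipped with two commuting involutive Lie algebra automorphisms θ and ω such that {x ∈ 𝔤 : θ(x) = −x and ω(x) = −x} = 0. Then there exist Lie ideals I and J of 𝔤, each stable under both θ and ω, such that 𝔤 = I ⊕ J, θ fixes I pointwise, and ω fixes J pointwise. -/

import Mathlib

section auxLemmas
variable {L : Type*} [LieRing L] [LieAlgebra ℂ L]

theorem lieEquivMapAdd (e : L ≃ₗ⁅ℂ⁆ L) (x y : L) : e (x + y) = e x + e y :=
  e.toLinearEquiv.map_add x y

theorem lieEquivMapSub (e : L ≃ₗ⁅ℂ⁆ L) (x y : L) : e (x - y) = e x - e y :=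
  e.toLinearEquiv.map_sub x y

theorem lieEquivMapNeg (e : L ≃ₗ⁅ℂ⁆ L) (x : L) : e (-x) = -e x :=
  e.toLinearEquiv.map_neg x

theorem lieEquivMapSmul (e : L ≃ₗ⁅ℂ⁆ L) (c : ℂ) (x : L) : e (c • x) = c • e x :=
  e.toLinearEquiv.map_smul c x

theorem lieEquivMapZero (e : L ≃ₗ⁅ℂ⁆ L) : e (0 : L) = 0 :=
  e.toLinearEquiv.map_zero

end auxLemmas

/-- If `θ`, `ω` are commuting involutive automorphisms of a finite-dimensional complex
semisimple Lie algebra `𝔤` whose common `(−1)`-eigenspace vanishes, then `𝔤` decomposes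
as a direct sum of `(θ,ω)`-stable ideals `I ⊕ J` with `θ` fixing `I` pointwise and `ω`
fixing `J` pointwise. -/
theorem decomposition_of_commuting_involutions {L : Type*} [LieRing L] [LieAlgebra ℂ L]
    [FiniteDimensional ℂ L] [LieAlgebra.IsSemisimple ℂ L]
    (θ ω : L ≃ₗ⁅ℂ⁆ L)
    (hθ : ∀ x : L, θ (θ x) = x) (hω : ∀ x : L, ω (ω x) = x)
    (hcomm : ∀ x : L, θ (ω x) = ω (θ x))
    (heig : ∀ x : L, θ x = -x → ω x = -x → x = 0) :
    ∃ I J : LieIdeal ℂ L,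
      (∀ x ∈ I, θ x ∈ I) ∧ (∀ x ∈ I, ω x ∈ I) ∧
      (∀ x ∈ J, θ x ∈ J) ∧ (∀ x ∈ J, ω x ∈ J) ∧
      I ⊔ J = ⊤ ∧ I ⊓ J = ⊥ ∧
      (∀ x ∈ I, θ x = x) ∧ (∀ x ∈ J, ω x = x) := by
  classical
  -- `ω` fixes the `(-1)`-eigenspace of `θ` pointwise.
  have hωP : ∀ p : L, θ p = -p → ω p = p := by
    intro p hp
    have h1 : θ (ω p) = -(ω p) := by rw [hcomm, hp, lieEquivMapNeg ω]
    have h2 : θ (p - ω p) = -(p - ω p) := by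
      rw [lieEquivMapSub θ, hp, h1]; abel
    have h3 : ω (p - ω p) = -(p - ω p) := by
      rw [lieEquivMapSub ω, hω]; abel
    have h4 := heig _ h2 h3
    have h5 : p = ω p := by
      have := sub_eq_zero.mp h4; exact this
    exact h5.symm
  -- the `(-1)`-eigenspace of `θ`, as a submodule
  let P : Submodule ℂ L :=
    { carrier := {x | θ x = -x}
      add_mem' := fun {a b} ha hb => by
        simp only [Set.mem_setOf_eq] at *
        rw [lieEquivMapAdd θ, ha, hb, neg_add]
      zero_mem' := by simp only [Set.mem_setOf_eq, lieEquivMapZero θ, neg_zero]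
      smul_mem' := fun c x hx => by
        simp only [Set.mem_setOf_eq] at *
        rw [lieEquivMapSmul θ, hx, smul_neg] }
  have hPmem : ∀ x : L, x ∈ P ↔ θ x = -x := fun _ => Iff.rfl
  -- the `(+1)`-eigenspaces of `θ` and of `ω`, as submodules
  let K : Submodule ℂ L :=
    { carrier := {x | θ x = x}
      add_mem' := fun {a b} ha hb => by
        simp only [Set.mem_setOf_eq] at *
        rw [lieEquivMapAdd θ, ha, hb]
      zero_mem' := by simp only [Set.mem_setOf_eq, lieEquivMapZero θ]
      smul_mem' := fun c x hx => by
        simp only [Set.mem_setOf_eq] at *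
        rw [lieEquivMapSmul θ, hx] }
  let Kω : Submodule ℂ L :=
    { carrier := {x | ω x = x}
      add_mem' := fun {a b} ha hb => by
        simp only [Set.mem_setOf_eq] at *
        rw [lieEquivMapAdd ω, ha, hb]
      zero_mem' := by simp only [Set.mem_setOf_eq, lieEquivMapZero ω]
      smul_mem' := fun c x hx => by
        simp only [Set.mem_setOf_eq] at *
        rw [lieEquivMapSmul ω, hx] }
  -- the span of brackets of pairs of elements of `P`
  let Bgen : Set L := {m | ∃ p q : L, θ p = -p ∧ θ q = -q ∧ ⁅p, q⁆ = m}
  let B : Submodule ℂ L := Submodule.span ℂ Bgen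
  have hBK : B ≤ K := by
    rw [Submodule.span_le]
    rintro m ⟨p, q, hp, hq, rfl⟩
    show θ ⁅p, q⁆ = ⁅p, q⁆
    rw [θ.map_lie, hp, hq, neg_lie, lie_neg, neg_neg]
  have hBKω : B ≤ Kω := by
    rw [Submodule.span_le]
    rintro m ⟨p, q, hp, hq, rfl⟩
    show ω ⁅p, q⁆ = ⁅p, q⁆
    rw [ω.map_lie, hωP p hp, hωP q hq]
  have hPKω : P ≤ Kω := fun p hp => hωP p hp
  -- the candidate ideal `T = P ⊔ B`
  let T : Submodule ℂ L := P ⊔ B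
  have hTKω : T ≤ Kω := sup_le hPKω hBKω
  -- decomposition of an arbitrary element into `θ`-eigenvectors
  have hdecomp : ∀ x : L, ∃ k b : L, θ k = k ∧ θ b = -b ∧ x = k + b := by
    intro x
    refine ⟨(2⁻¹ : ℂ) • (x + θ x), (2⁻¹ : ℂ) • (x - θ x), ?_, ?_, ?_⟩
    · rw [lieEquivMapSmul θ, lieEquivMapAdd θ, hθ, add_comm]
    · rw [lieEquivMapSmul θ, lieEquivMapSub θ, hθ, ← smul_neg, neg_sub]
    · have h : (x + θ x) + (x - θ x) = (2 : ℂ) • x := by rw [two_smul]; abel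
      rw [← smul_add, h, smul_smul]
      norm_num
  -- brackets of anything with `P` land in `T`
  have hP_bracket : ∀ x p : L, θ p = -p → ⁅x, p⁆ ∈ T := by
    intro x p hp
    obtain ⟨k, b, hk, hb, rfl⟩ := hdecomp x
    rw [add_lie]
    refine add_mem (Submodule.mem_sup_left ?_) (Submodule.mem_sup_right ?_)
    · show θ ⁅k, p⁆ = -⁅k, p⁆
      rw [θ.map_lie, hk, hp, lie_neg]
    · exact Submodule.subset_span ⟨b, p, hb, hp, rfl⟩
  -- brackets of `P` with `T` land in `T`
  have hPT : ∀ p : L, θ p = -p → ∀ t ∈ T, ⁅p, t⁆ ∈ T := by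
    intro p hp t ht
    obtain ⟨y, hy, z, hz, rfl⟩ := Submodule.mem_sup.mp ht
    rw [lie_add]
    refine add_mem (Submodule.mem_sup_right ?_) (Submodule.mem_sup_left ?_)
    · exact Submodule.subset_span ⟨p, y, hp, hy, rfl⟩
    · show θ ⁅p, z⁆ = -⁅p, z⁆
      rw [θ.map_lie, hp, hBK hz, neg_lie]
  -- brackets of anything with `B` land in `T`
  have hBT : ∀ m ∈ B, ∀ x : L, ⁅x, m⁆ ∈ T := by
    have : B ≤ { carrier := {m | ∀ x : L, ⁅x, m⁆ ∈ T}
                 add_mem' := fun {a b} ha hb x => by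
                   rw [lie_add]; exact add_mem (ha x) (hb x)
                 zero_mem' := fun x => by rw [lie_zero]; exact zero_mem T
                 smul_mem' := fun c m hm x => by
                   rw [lie_smul]; exact Submodule.smul_mem T c (hm x) } := by
      rw [Submodule.span_le]
      rintro m ⟨p, q, hp, hq, rfl⟩
      intro x
      show ⁅x, ⁅p, q⁆⁆ ∈ T
      rw [leibniz_lie]
      refine add_mem ?_ (hPT p hp _ (hP_bracket x q hq))
      have h1 : ⁅⁅x, p⁆, q⁆ = -⁅q, ⁅x, p⁆⁆ := (lie_skew _ _).symm
      rw [h1]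
      exact neg_mem (hPT q hq _ (hP_bracket x p hp))
    exact fun m hm x => this hm x
  -- `T` is an ideal
  have hT_ideal : ∀ (x : L), ∀ m ∈ T, ⁅x, m⁆ ∈ T := by
    intro x m hm
    obtain ⟨y, hy, z, hz, rfl⟩ := Submodule.mem_sup.mp hm
    rw [lie_add]
    exact add_mem (hP_bracket x y hy) (hBT z hz x)
  let J : LieIdeal ℂ L := { T with lie_mem := fun {x m} hm => hT_ideal x m hm }
  have hJmem : ∀ x : L, x ∈ J ↔ x ∈ T := fun _ => Iff.rfl
  -- `ω` fixes `J` pointwise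
  have hωJid : ∀ x ∈ J, ω x = x := fun x hx => hTKω ((hJmem x).mp hx)
  -- `θ` stabilises `J`
  have hθJ : ∀ x ∈ J, θ x ∈ J := by
    intro x hx
    obtain ⟨y, hy, z, hz, rfl⟩ := Submodule.mem_sup.mp ((hJmem _).mp hx)
    rw [hJmem, lieEquivMapAdd θ]
    refine add_mem (Submodule.mem_sup_left ?_) (Submodule.mem_sup_right ?_)
    · show θ (θ y) = -θ y
      rw [hθ, hy, neg_neg]
    · rw [hBK hz]; exact hz
  -- the complementary ideal
  have hcompl : IsCompl J Jᶜ := isCompl_compl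
  have hsup : Jᶜ ⊔ J = ⊤ := hcompl.symm.sup_eq_top
  have hinf : Jᶜ ⊓ J = ⊥ := hcompl.symm.inf_eq_bot
  -- elements of `Jᶜ` bracket to zero with `J`
  have hzero : ∀ x ∈ Jᶜ, ∀ y ∈ J, ⁅x, y⁆ = 0 := by
    intro x hx y hy
    have h1 : ⁅x, y⁆ ∈ J := J.lie_mem hy
    have h2 : ⁅x, y⁆ ∈ (Jᶜ : LieIdeal ℂ L) := by
      have := (Jᶜ : LieIdeal ℂ L).lie_mem (x := y) hx
      have h3 : ⁅x, y⁆ = -⁅y, x⁆ := (lie_skew _ _).symm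
      rw [h3]; exact neg_mem this
    have : ⁅x, y⁆ ∈ Jᶜ ⊓ J := (LieSubmodule.mem_inf _ _ _).mpr ⟨h2, h1⟩
    rw [hinf] at this
    exact (LieSubmodule.mem_bot _).mp this
  -- characterisation of `Jᶜ` as the centraliser of `J`
  have hIc_mem : ∀ x : L, (∀ y ∈ J, ⁅x, y⁆ = 0) → x ∈ Jᶜ := by
    intro x hx
    have hxtop : x ∈ Jᶜ ⊔ J := by rw [hsup]; exact LieSubmodule.mem_top x
    obtain ⟨i, hi, j, hj, hij⟩ := (LieSubmodule.mem_sup _ _ x).mp hxtop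
    have hjcent : ∀ y : L, ⁅y, j⁆ = 0 := by
      intro y
      have hytop : y ∈ Jᶜ ⊔ J := by rw [hsup]; exact LieSubmodule.mem_top y
      obtain ⟨i', hi', j', hj', hij'⟩ := (LieSubmodule.mem_sup _ _ y).mp hytop
      have e1 : ⁅i', j⁆ = 0 := hzero i' hi' j hj
      have e2 : ⁅j', j⁆ = 0 := by
        have ej : j = x - i := by rw [← hij]; abel
        rw [ej, lie_sub]
        have ex : ⁅j', x⁆ = 0 := by
          have := hx j' hj'
          have h3 : ⁅j', x⁆ = -⁅x, j'⁆ := (lie_skew _ _).symm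
          rw [h3, this, neg_zero]
        have ei : ⁅j', i⁆ = 0 := by
          have := hzero i hi j' hj'
          have h3 : ⁅j', i⁆ = -⁅i, j'⁆ := (lie_skew _ _).symm
          rw [h3, this, neg_zero]
        rw [ex, ei, sub_zero]
      rw [← hij', add_lie, e1, e2, add_zero]
    have hjz : j ∈ LieAlgebra.center ℂ L := fun y => hjcent y
    rw [LieAlgebra.center_eq_bot ℂ L] at hjz
    have hj0 : j = 0 := (LieSubmodule.mem_bot _).mp hjz
    rw [← hij, hj0, add_zero]
    exact hi
  -- `θ` and `ω` stabilise `Jᶜ`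
  have hθI : ∀ x ∈ Jᶜ, θ x ∈ Jᶜ := by
    intro x hx
    apply hIc_mem
    intro y hy
    have h1 : ⁅θ x, y⁆ = θ ⁅x, θ y⁆ := by
      rw [θ.map_lie, hθ]
    rw [h1, hzero x hx (θ y) (hθJ y hy), lieEquivMapZero θ]
  have hωI : ∀ x ∈ Jᶜ, ω x ∈ Jᶜ := by
    intro x hx
    apply hIc_mem
    intro y hy
    have h1 : ⁅ω x, y⁆ = ω ⁅x, ω y⁆ := by
      rw [ω.map_lie, hω]
    have hωy : ω y ∈ J := by rw [hωJid y hy]; exact hy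
    rw [h1, hzero x hx (ω y) hωy, lieEquivMapZero ω]
  -- `θ` fixes `Jᶜ` pointwise
  have hθIid : ∀ x ∈ Jᶜ, θ x = x := by
    intro x hx
    have hb : x - θ x ∈ (Jᶜ : LieIdeal ℂ L) := sub_mem hx (hθI x hx)
    have hbP : x - θ x ∈ J := by
      rw [hJmem]
      apply Submodule.mem_sup_left
      show θ (x - θ x) = -(x - θ x)
      rw [lieEquivMapSub θ, hθ, neg_sub]
    have : x - θ x ∈ Jᶜ ⊓ J := (LieSubmodule.mem_inf _ _ _).mpr ⟨hb, hbP⟩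
    rw [hinf] at this
    have h0 : x - θ x = 0 := (LieSubmodule.mem_bot _).mp this
    have := sub_eq_zero.mp h0
    exact this.symm
  exact ⟨Jᶜ, J, hθI, hωI, hθJ, fun x hx => by rw [hωJid x hx]; exact hx,
    hsup, hinf, hθIid, hωJid⟩
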